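/- Let K and K' be non-degenerate CMIs, K'' = R_K^{K'}, can(pur(K)) = (C, ⟨𝕀_K, 𝕀_K, P_1,…,P_t⟩) and can(pur(K'')) = (C'', ⟨𝕀_{K''}, 𝕀_{K''}, P''_1,…,P''_r⟩) (general notation), with S = C ∪ (∪_{i=1}^t P_i) and P'' = ∪_{j=1}^r P''_j. If K implies K' and R_K^{K'} ≠ (·,⟨⟩), then C ⊆ C'' ⊆ S \ P''. -/

import Mathlib

open scoped Classical

namespace Paper

variable {n : ℕ}

/-- The marginal distribution of the coordinates in `α` of a joint distribution `p` of
the discrete random variables `X_1, …, X_n` (each taking countably many values, coded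
as natural numbers). -/
noncomputable def marginal (p : PMF (Fin n → ℕ)) (α : Finset (Fin n)) :
    PMF ({ i // i ∈ α } → ℕ) :=
  p.map fun x i => x i.1

/-- The Shannon (joint) entropy `H(X_α)`. -/
noncomputable def Hm (p : PMF (Fin n → ℕ)) (α : Finset (Fin n)) : ℝ :=
  ∑' y, Real.negMulLog ((marginal p α) y).toReal

/-- The conditional entropy `H(X_β | X_α) = H(X_{β ∪ α}) - H(X_α)`. -/
noncomputable def Hc (p : PMF (Fin n → ℕ)) (β α : Finset (Fin n)) : ℝ :=
  Hm p (β ∪ α) - Hm p α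

/-- Every individual random variable `X_i` has finite Shannon entropy
(the series defining `H(X_i)` is summable). -/
def FiniteEntropy (p : PMF (Fin n → ℕ)) : Prop :=
  ∀ i : Fin n, Summable fun y : ℕ => Real.negMulLog ((p.map fun x => x i) y).toReal

/-- `J(X_{Q_1}, …, X_{Q_k} | X_C) = (∑ i, H(X_{Q_i}|X_C)) - H(X_{Q_1},…,X_{Q_k}|X_C)`;
the joint conditional entropy of the tuple `(X_{Q_1},…,X_{Q_k})` equals
`H(X_{∪ i, Q_i} | X_C)` since the two tuples determine each other. -/
noncomputable def J (p : PMF (Fin n → ℕ)) (C : Finset (Fin n))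
    (Qs : Multiset (Finset (Fin n))) : ℝ :=
  (Qs.map fun Q => Hc p Q C).sum - Hc p Qs.sup C

/-- A conditional mutual independency (CMI) on `{1, …, n}`: a conditioning set `C`
together with a finite multiset `⟨Q_1, …, Q_k⟩` of subsets of `{1, …, n}`. -/
structure CMI (n : ℕ) where
  C : Finset (Fin n)
  Qs : Multiset (Finset (Fin n))

/-- `K` is valid for the joint distribution `p`. -/
def Valid (p : PMF (Fin n → ℕ)) (K : CMI n) : Prop :=
  J p K.C K.Qs = 0

/-- `K` is degenerate: valid for every finite-entropy joint distribution. -/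
def Degenerate (K : CMI n) : Prop :=
  ∀ p : PMF (Fin n → ℕ), FiniteEntropy p → Valid p K

/-- `K ∼ K'`: valid for exactly the same finite-entropy joint distributions. -/
def Equivalent (K K' : CMI n) : Prop :=
  ∀ p : PMF (Fin n → ℕ), FiniteEntropy p → (Valid p K ↔ Valid p K')

/-- `K` implies `K'`. -/
def Implies (K K' : CMI n) : Prop :=
  ∀ p : PMF (Fin n → ℕ), FiniteEntropy p → Valid p K → Valid p K'

/-- `K` is in pure form: every `Q_i` is nonempty and disjoint from `C`. -/
def IsPure (K : CMI n) : Prop :=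
  ∀ Q ∈ K.Qs, Q ≠ ∅ ∧ Q ∩ K.C = ∅

/-- The pure form `pur(K) = (C, ⟨Q_i \ C : Q_i \ C ≠ ∅⟩)`. -/
noncomputable def pur (K : CMI n) : CMI n :=
  ⟨K.C, (K.Qs.map fun Q => Q \ K.C).filter fun Q => Q ≠ ∅⟩

/-- The set `𝕀_K` of repeated indices of `K`: indices lying in `Q_i ∩ Q_j` for two
distinct entries `i ≠ j` of the multiset (automatically `∅` when `k ≤ 1`). -/
noncomputable def repSet (K : CMI n) : Finset (Fin n) :=
  Finset.univ.filter fun q => 2 ≤ Multiset.card (K.Qs.filter fun Q => q ∈ Q)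

/-- The multiset `⟨P_1, …, P_t⟩` of nonempty sets among the `Q_i \ 𝕀_K`. -/
noncomputable def parts (K : CMI n) : Multiset (Finset (Fin n)) :=
  (K.Qs.map fun Q => Q \ repSet K).filter fun P => P ≠ ∅

/-- The multiset of the `P_j`-entries of the canonical form `can(K)`
(general notation). -/
noncomputable def canParts (K : CMI n) : Multiset (Finset (Fin n)) :=
  if Multiset.card K.Qs ≤ 1 then 0
  else if repSet K ≠ ∅ ∧ Multiset.card (parts K) ≤ 1 then 0
  else parts K

/-- The canonical form `can(K)` (of a pure-form CMI); all degenerate canonical forms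
`(·,⟨⟩)` are represented by `⟨∅, 0⟩`. -/
noncomputable def can (K : CMI n) : CMI n :=
  if Multiset.card K.Qs ≤ 1 then ⟨∅, 0⟩
  else if repSet K = ∅ then ⟨K.C, parts K⟩
  else if Multiset.card (parts K) ≤ 1 then ⟨K.C, {repSet K, repSet K}⟩
  else ⟨K.C, repSet K ::ₘ repSet K ::ₘ parts K⟩

/-- `R_K^{K'}`: the CMI "`K'` conditioning on `K`"; the degenerate case `(·,⟨⟩)` is
represented by `⟨∅, 0⟩`. -/
noncomputable def RCond (K K' : CMI n) : CMI n :=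
  let I := repSet (pur K)
  let I' := repSet (pur K')
  let Ts := ((canParts (pur K')).map fun P => P \ I).filter fun T => T ≠ ∅
  if I' \ I = ∅ ∧ Multiset.card Ts ≤ 1 then ⟨∅, 0⟩
  else if I' \ I = ∅ then ⟨K'.C \ I, Ts⟩
  else if Multiset.card Ts ≤ 1 then ⟨K'.C \ I, {I' \ I, I' \ I}⟩
  else ⟨K'.C \ I, (I' \ I) ::ₘ (I' \ I) ::ₘ Ts⟩


open scoped ENNReal

section Machinery


/-- entropy function of a PMF -/
noncomputable def ent {β : Type*} (q : PMF β) : ℝ := ∑' y, Real.negMulLog (q y).toReal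

lemma ent_pure {β : Type*} (b : β) : ent (PMF.pure b) = 0 := by
  classical
  rw [ent, tsum_eq_sum (s := {b}) (by
    intro y hy
    simp only [Finset.mem_singleton] at hy
    rw [PMF.pure_apply, if_neg hy]
    simp)]
  simp [PMF.pure_apply]

lemma map_apply_of_injective {α β : Type*} (q : PMF α) (f : α → β) (hf : Function.Injective f)
    (x : α) : (q.map f) (f x) = q x := by
  rw [PMF.map_apply]
  have h0 : ∀ a, a ≠ x → (if f x = f a then q a else 0) = 0 :=
    fun a ha => if_neg (fun h => ha (hf h.symm))
  rw [tsum_eq_single x h0, if_pos rfl]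

lemma ent_map_injective {α β : Type*} (q : PMF α) (f : α → β) (hf : Function.Injective f) :
    ent (q.map f) = ent q := by
  rw [ent, ent, ← Function.Injective.tsum_eq hf]
  · congr 1; funext x; rw [map_apply_of_injective q f hf]
  · intro y hy
    simp only [Function.mem_support, ne_eq] at hy ⊢
    by_contra h
    apply hy
    have : (q.map f) y = 0 := by
      rw [PMF.map_apply]
      apply ENNReal.tsum_eq_zero.mpr
      intro a
      rw [if_neg]
      rintro rfl
      exact h ⟨a, rfl⟩
    rw [this]
    simp

lemma ent_uniform {β : Type*} [Fintype β] [Nonempty β] :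
    ent (PMF.uniformOfFintype β) = Real.log (Fintype.card β) := by
  classical
  rw [ent, tsum_fintype]
  have h1 : ∀ y : β, ((PMF.uniformOfFintype β) y).toReal = (Fintype.card β : ℝ)⁻¹ := by
    intro y
    rw [PMF.uniformOfFintype_apply, ENNReal.toReal_inv]
    norm_num
  simp only [h1]
  rw [Finset.sum_const, Finset.card_univ]
  have hc : (0:ℝ) < (Fintype.card β : ℝ) := by positivity
  rw [nsmul_eq_mul, Real.negMulLog, Real.log_inv]
  field_simp


/-- the four GF(2)-linear functions of two bits that we use -/
def bitf : Fin 4 → Bool × Bool → Bool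
  | 0, _ => false
  | 1, x => x.1
  | 2, x => x.2
  | 3, x => xor x.1 x.2

lemma bitf_third : ∀ w t u : Fin 4, t ≠ 0 → u ≠ 0 → w ≠ 0 → t ≠ u → w ≠ t → w ≠ u →
    ∀ x, bitf w x = xor (bitf t x) (bitf u x) := by decide

lemma bitf_pair_injective : ∀ t u : Fin 4, t ≠ 0 → u ≠ 0 → t ≠ u →
    Function.Injective (fun x => (bitf t x, bitf u x)) := by decide

lemma map_uniform_of_bijective {α β : Type*} [Fintype α] [Nonempty α] [Fintype β] [Nonempty β]
    (f : α → β) (hf : Function.Bijective f) :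
    (PMF.uniformOfFintype α).map f = PMF.uniformOfFintype β := by
  classical
  ext y
  obtain ⟨x, rfl⟩ := hf.2 y
  rw [map_apply_of_injective _ f hf.1, PMF.uniformOfFintype_apply, PMF.uniformOfFintype_apply,
    Fintype.card_of_bijective hf]

lemma map_bitf_uniform (t : Fin 4) (ht : t ≠ 0) :
    (PMF.uniformOfFintype (Bool × Bool)).map (bitf t) = PMF.uniformOfFintype Bool := by
  classical
  ext b
  rw [PMF.map_apply, tsum_fintype]
  have h4 : ∀ x : Bool × Bool, (PMF.uniformOfFintype (Bool × Bool)) x = (4 : ℝ≥0∞)⁻¹ := by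
    intro x
    rw [PMF.uniformOfFintype_apply]
    norm_num
  simp only [h4]
  have hcard : (Finset.univ.filter (fun x : Bool × Bool => b = bitf t x)).card = 2 := by
    fin_cases t <;> simp_all <;> cases b <;> decide
  rw [← Finset.sum_filter, Finset.sum_const, hcard, PMF.uniformOfFintype_apply]
  simp only [Fintype.card_bool, nsmul_eq_mul, Nat.cast_ofNat]
  rw [show ((4:ℝ≥0∞))⁻¹ = (2*2 : ℝ≥0∞)⁻¹ by norm_num,
    ENNReal.mul_inv (by norm_num) (by norm_num)]
  rw [← mul_assoc, ENNReal.mul_inv_cancel (by norm_num) (by norm_num), one_mul]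


/-- the product distribution of our gadget: coordinate `i` carries `bitf (v i)` of two fair bits -/
noncomputable def pv (v : Fin n → Fin 4) : PMF (Fin n → ℕ) :=
  (PMF.uniformOfFintype (Bool × Bool)).map (fun x i => cond (bitf (v i) x) 1 0)

/-- the rank of the set of vectors carried by `α` -/
noncomputable def rkv (v : Fin n → Fin 4) (α : Finset (Fin n)) : ℕ :=
  min (((α.image v).erase 0).card) 2

lemma cond_inj : ∀ b b' : Bool, (cond b 1 0 : ℕ) = cond b' 1 0 → b = b' := by decide

lemma marginal_pv (v : Fin n → Fin 4) (α : Finset (Fin n)) :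
    marginal (pv v) α = (PMF.uniformOfFintype (Bool × Bool)).map
      (fun x (i : { i // i ∈ α }) => cond (bitf (v i.1) x) 1 0) := by
  rw [marginal, pv, PMF.map_comp]
  rfl

lemma mem_sv (v : Fin n → Fin 4) (α : Finset (Fin n)) (t : Fin 4) :
    t ∈ (α.image v).erase 0 ↔ (t ≠ 0 ∧ ∃ i ∈ α, v i = t) := by
  simp [Finset.mem_erase, Finset.mem_image]

lemma Hm_pv (v : Fin n → Fin 4) (α : Finset (Fin n)) :
    Hm (pv v) α = Real.log (2 ^ rkv v α) := by
  classical
  have hH : Hm (pv v) α = ent ((PMF.uniformOfFintype (Bool × Bool)).map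
      (fun x (i : { i // i ∈ α }) => cond (bitf (v i.1) x) 1 0)) := by
    rw [Hm, marginal_pv]; rfl
  set s := (α.image v).erase 0 with hs
  by_cases h0 : s = ∅
  · have hconst : (fun x (i : { i // i ∈ α }) => (cond (bitf (v i.1) x) 1 0 : ℕ))
        = fun _ => (fun _ => 0) := by
      funext x i
      have hv : v i.1 = 0 := by
        by_contra hv
        have : v i.1 ∈ s := (mem_sv v α _).mpr ⟨hv, i.1, i.2, rfl⟩
        simp [h0] at this
      rw [hv]; rfl
    have hrk : rkv v α = 0 := by
      have hc0 : ((α.image v).erase 0).card = s.card := by rw [hs]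
      simp [rkv, hc0, h0]
    rw [hH, hconst, hrk]
    have : ((PMF.uniformOfFintype (Bool × Bool)).map
        (fun _ => (fun _ => (0:ℕ)) : _ → ({ i // i ∈ α } → ℕ))) = PMF.pure (fun _ => 0) :=
      PMF.map_const _ _
    rw [this, ent_pure]
    norm_num
  · by_cases h1 : s.card = 1
    · obtain ⟨t, hst⟩ := Finset.card_eq_one.mp h1
      have htmem : t ∈ s := by rw [hst]; exact Finset.mem_singleton_self t
      obtain ⟨ht0, i₀, hi₀, hvi₀⟩ := (mem_sv v α t).mp htmem
      set F : Bool → ({ i // i ∈ α } → ℕ) :=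
        fun b i => if v i.1 = t then (cond b 1 0 : ℕ) else 0 with hF
      have hfac : (fun x (i : { i // i ∈ α }) => (cond (bitf (v i.1) x) 1 0 : ℕ))
          = F ∘ (bitf t) := by
        funext x i
        by_cases hv : v i.1 = t
        · simp [hF, hv, Function.comp]
        · have hv0 : v i.1 = 0 := by
            by_contra hvv
            have : v i.1 ∈ s := (mem_sv v α _).mpr ⟨hvv, i.1, i.2, rfl⟩
            rw [hst, Finset.mem_singleton] at this
            exact hv this
          simp [hF, hv, hv0, Function.comp, bitf, Ne.symm ht0]
      have hFinj : Function.Injective F := by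
        intro b b' h
        have := congrFun h ⟨i₀, hi₀⟩
        simp only [hF, hvi₀, if_pos] at this
        exact cond_inj _ _ this
      have hrk : rkv v α = 1 := by
        have hc0 : ((α.image v).erase 0).card = s.card := by rw [hs]
        simp [rkv, hc0, h1]
      rw [hH, hfac, ← PMF.map_comp, map_bitf_uniform t ht0, ent_map_injective _ F hFinj,
        ent_uniform, hrk]
      norm_num
    · have h2 : 2 ≤ s.card := by
        have : s.card ≠ 0 := by
          simp only [ne_eq, Finset.card_eq_zero]
          exact h0
        omega
      obtain ⟨t₁, ht₁s, t₂, ht₂s, hne⟩ := Finset.one_lt_card.mp (show 1 < s.card by omega)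
      obtain ⟨ht₁0, i₁, hi₁, hvi₁⟩ := (mem_sv v α t₁).mp ht₁s
      obtain ⟨ht₂0, i₂, hi₂, hvi₂⟩ := (mem_sv v α t₂).mp ht₂s
      set F : Bool × Bool → ({ i // i ∈ α } → ℕ) :=
        fun p i => if v i.1 = t₁ then (cond p.1 1 0 : ℕ) else if v i.1 = t₂ then cond p.2 1 0
          else if v i.1 = 0 then 0 else cond (xor p.1 p.2) 1 0 with hF
      set r : Bool × Bool → Bool × Bool := fun x => (bitf t₁ x, bitf t₂ x) with hr
      have hfac : (fun x (i : { i // i ∈ α }) => (cond (bitf (v i.1) x) 1 0 : ℕ))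
          = F ∘ r := by
        funext x i
        by_cases hv1 : v i.1 = t₁
        · simp [hF, hr, hv1, Function.comp]
        · by_cases hv2 : v i.1 = t₂
          · simp [hF, hr, hv1, hv2, Function.comp, Ne.symm hne]
          · by_cases hv0 : v i.1 = 0
            · simp [hF, hr, hv1, hv2, hv0, Function.comp, bitf, Ne.symm ht₁0, Ne.symm ht₂0]
            · simp only [hF, hr, Function.comp, hv1, hv2, hv0, if_neg, if_false]
              rw [bitf_third (v i.1) t₁ t₂ ht₁0 ht₂0 hv0 hne hv1 hv2 x]
      have hFinj : Function.Injective F := by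
        intro p p' h
        have h1' := congrFun h ⟨i₁, hi₁⟩
        have h2' := congrFun h ⟨i₂, hi₂⟩
        simp only [hF, hvi₁, if_pos] at h1'
        have hne' : t₂ ≠ t₁ := fun hh => hne hh.symm
        simp only [hF, hvi₂, hne', if_neg, if_pos] at h2'
        exact Prod.ext (cond_inj _ _ h1') (cond_inj _ _ h2')
      have hrbij : Function.Bijective r := by
        have := bitf_pair_injective t₁ t₂ ht₁0 ht₂0 hne
        exact (Finite.injective_iff_bijective).mp this
      have hrk : rkv v α = 2 := by
        have hc0 : ((α.image v).erase 0).card = s.card := by rw [hs]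
        simp only [rkv, hc0]
        omega
      rw [hH, hfac, ← PMF.map_comp, map_uniform_of_bijective r hrbij,
        ent_map_injective _ F hFinj, ent_uniform, hrk]
      norm_num


lemma Hc_pv (v : Fin n → Fin 4) (β α : Finset (Fin n)) :
    Hc (pv v) β α = ((rkv v (β ∪ α) : ℝ) - rkv v α) * Real.log 2 := by
  rw [Hc, Hm_pv, Hm_pv, Real.log_pow, Real.log_pow]
  ring

lemma FE_pv (v : Fin n → Fin 4) : FiniteEntropy (pv v) := by
  intro i
  apply summable_of_ne_finset_zero (s := ({0, 1} : Finset ℕ))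
  intro y hy
  have hz : ((pv v).map (fun x => x i)) y = 0 := by
    rw [pv, PMF.map_comp, PMF.map_apply]
    apply ENNReal.tsum_eq_zero.mpr
    intro x
    rw [if_neg]
    intro h
    apply hy
    rw [h]
    cases hb : bitf (v i) x <;> simp [Function.comp, hb]
  rw [hz]
  simp

lemma mem_msup (Qs : Multiset (Finset (Fin n))) (x : Fin n) :
    x ∈ Qs.sup ↔ ∃ Q ∈ Qs, x ∈ Q := by
  induction Qs using Multiset.induction_on with
  | empty => simp [Multiset.sup_zero]
  | cons a s ih =>
    rw [Multiset.sup_cons]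
    have : a ⊔ s.sup = a ∪ s.sup := rfl
    rw [this, Finset.mem_union, ih]
    simp

lemma sum_map_ite (Qs : Multiset (Finset (Fin n))) (P : Finset (Fin n) → Prop)
    [DecidablePred P] :
    (Qs.map fun Q => if P Q then (1:ℝ) else 0).sum = (Multiset.card (Qs.filter P) : ℝ) := by
  induction Qs using Multiset.induction_on with
  | empty => simp
  | cons a s ih =>
    by_cases hP : P a
    · rw [Multiset.map_cons, Multiset.sum_cons, if_pos hP, Multiset.filter_cons_of_pos _ hP, ih, Multiset.card_cons]
      push_cast
      ring
    · rw [Multiset.map_cons, Multiset.sum_cons, if_neg hP, Multiset.filter_cons_of_neg _ hP, ih]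
      ring

lemma sum_map_nonneg {β : Type*} (Qs : Multiset β) (f : β → ℝ) (h : ∀ Q ∈ Qs, 0 ≤ f Q) :
    0 ≤ (Qs.map f).sum := by
  apply Multiset.sum_nonneg
  intro x hx
  obtain ⟨Q, hQ, rfl⟩ := Multiset.mem_map.mp hx
  exact h Q hQ

lemma log2_ne : Real.log 2 ≠ 0 := ne_of_gt (Real.log_pos (by norm_num))

lemma valid_pv_iff (v : Fin n → Fin 4) (C : Finset (Fin n)) (Qs : Multiset (Finset (Fin n))) :
    Valid (pv v) ⟨C, Qs⟩ ↔
      (Qs.map fun Q => ((rkv v (Q ∪ C) : ℝ) - rkv v C)).sum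
        = (rkv v (Qs.sup ∪ C) : ℝ) - rkv v C := by
  rw [Valid, J]
  have h1 : (Qs.map fun Q => Hc (pv v) Q C)
      = Qs.map fun Q => ((rkv v (Q ∪ C) : ℝ) - rkv v C) * Real.log 2 :=
    Multiset.map_congr rfl (fun Q _ => Hc_pv v Q C)
  rw [h1, Hc_pv, Multiset.sum_map_mul_right, ← sub_mul, mul_eq_zero, sub_eq_zero]
  constructor
  · rintro (h | h)
    · exact h
    · exact absurd h log2_ne
  · exact fun h => Or.inl h


/-- the copy distribution: all variables in `A` are one shared fair bit -/
noncomputable def vA (A : Finset (Fin n)) : Fin n → Fin 4 := fun i => if i ∈ A then 1 else 0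

lemma rk_vA (A α : Finset (Fin n)) : rkv (vA A) α = if (α ∩ A).Nonempty then 1 else 0 := by
  classical
  by_cases h : (α ∩ A).Nonempty
  · obtain ⟨x, hx⟩ := h
    rw [Finset.mem_inter] at hx
    have h1 : (α.image (vA A)).erase 0 = {1} := by
      ext t
      rw [mem_sv, Finset.mem_singleton]
      constructor
      · rintro ⟨ht0, i, hi, hvi⟩
        unfold vA at hvi
        by_cases hiA : i ∈ A
        · rw [if_pos hiA] at hvi; exact hvi.symm
        · rw [if_neg hiA] at hvi; exact absurd hvi.symm ht0
      · rintro rfl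
        exact ⟨by decide, x, hx.1, if_pos hx.2⟩
    rw [rkv, h1, if_pos ⟨x, Finset.mem_inter.mpr hx⟩]
    decide
  · have h1 : (α.image (vA A)).erase 0 = ∅ := by
      ext t
      rw [mem_sv]
      simp only [Finset.notMem_empty, iff_false, not_and]
      rintro ht0 ⟨i, hi, hvi⟩
      unfold vA at hvi
      by_cases hiA : i ∈ A
      · exact h ⟨i, Finset.mem_inter.mpr ⟨hi, hiA⟩⟩
      · rw [if_neg hiA] at hvi; exact ht0 hvi.symm
    rw [rkv, h1, if_neg h]
    rfl

lemma card_filter_pos {β : Type*} (Qs : Multiset β) (P : β → Prop) [DecidablePred P] :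
    1 ≤ Multiset.card (Qs.filter P) ↔ ∃ Q ∈ Qs, P Q := by
  constructor
  · intro h
    have : Qs.filter P ≠ 0 := by
      intro h0
      rw [h0] at h
      simp at h
    obtain ⟨Q, hQ⟩ := Multiset.exists_mem_of_ne_zero this
    rw [Multiset.mem_filter] at hQ
    exact ⟨Q, hQ.1, hQ.2⟩
  · rintro ⟨Q, hQ, hP⟩
    have hmem : Q ∈ Qs.filter P := Multiset.mem_filter.mpr ⟨hQ, hP⟩
    have hpos : 0 < Multiset.card (Qs.filter P) := Multiset.card_pos.mpr
      (fun h0 => by rw [h0] at hmem; exact absurd hmem (Multiset.notMem_zero Q))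
    omega

lemma valid_copy_iff (A C : Finset (Fin n)) (Qs : Multiset (Finset (Fin n))) :
    Valid (pv (vA A)) ⟨C, Qs⟩ ↔
      ((C ∩ A).Nonempty ∨ Multiset.card (Qs.filter fun Q => (Q ∩ A).Nonempty) ≤ 1) := by
  classical
  rw [valid_pv_iff]
  by_cases hC : (C ∩ A).Nonempty
  · have hQ : ∀ Q ∈ Qs, ((rkv (vA A) (Q ∪ C) : ℝ) - rkv (vA A) C) = (fun _ => (0:ℝ)) Q := by
      intro Q _
      rw [rk_vA, rk_vA, if_pos hC, if_pos (hC.mono (Finset.inter_subset_inter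
        Finset.subset_union_right (Finset.Subset.refl A)))]
      simp
    rw [Multiset.map_congr rfl hQ]
    have hsup : ((Qs.sup ∪ C) ∩ A).Nonempty := hC.mono (Finset.inter_subset_inter
      Finset.subset_union_right (Finset.Subset.refl A))
    rw [rk_vA, rk_vA, if_pos hC, if_pos hsup]
    simp only [Multiset.map_const', Multiset.sum_replicate, smul_zero]
    norm_num [hC]
  · have hCe : C ∩ A = ∅ := Finset.not_nonempty_iff_eq_empty.mp hC
    have hrC : rkv (vA A) C = 0 := by rw [rk_vA, if_neg hC]
    have hint : ∀ β : Finset (Fin n), (β ∪ C) ∩ A = β ∩ A := by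
      intro β
      rw [Finset.union_inter_distrib_right, hCe, Finset.union_empty]
    have hterm : ∀ Q ∈ Qs, ((rkv (vA A) (Q ∪ C) : ℝ) - rkv (vA A) C)
        = (fun Q => if (Q ∩ A).Nonempty then (1:ℝ) else 0) Q := by
      intro Q _
      show ((rkv (vA A) (Q ∪ C) : ℝ) - rkv (vA A) C) = if (Q ∩ A).Nonempty then (1:ℝ) else 0
      rw [hrC, rk_vA, hint]
      split_ifs <;> norm_num
    rw [Multiset.map_congr rfl hterm, sum_map_ite, hrC, rk_vA, hint]
    have hiff : (Qs.sup ∩ A).Nonempty ↔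
        1 ≤ Multiset.card (Qs.filter fun Q => (Q ∩ A).Nonempty) := by
      rw [card_filter_pos]
      constructor
      · rintro ⟨x, hx⟩
        rw [Finset.mem_inter] at hx
        obtain ⟨Q, hQ, hxQ⟩ := (mem_msup Qs x).mp hx.1
        exact ⟨Q, hQ, ⟨x, Finset.mem_inter.mpr ⟨hxQ, hx.2⟩⟩⟩
      · rintro ⟨Q, hQ, x, hx⟩
        rw [Finset.mem_inter] at hx
        exact ⟨x, Finset.mem_inter.mpr ⟨(mem_msup Qs x).mpr ⟨Q, hQ, hx.1⟩, hx.2⟩⟩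
    simp only [hC, false_or]
    set m := Multiset.card (Qs.filter fun Q => (Q ∩ A).Nonempty) with hm
    by_cases hsup : (Qs.sup ∩ A).Nonempty
    · have h1m : 1 ≤ m := hiff.mp hsup
      rw [if_pos hsup]
      constructor
      · intro h
        have h1' : (m:ℝ) = 1 := by rw [h]; norm_num
        have : m = 1 := by exact_mod_cast h1'
        omega
      · intro h
        have : m = 1 := by omega
        rw [this]
        norm_num
    · have h0m : m = 0 := by
        have := hiff.not.mp hsup
        omega
      rw [if_neg hsup, h0m]
      norm_num


/-- the xor distribution: `q₁ ↦ U`, `q₂ ↦ V`, `c ↦ U ⊕ V` -/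
noncomputable def vX (q₁ q₂ c : Fin n) : Fin n → Fin 4 :=
  fun i => if i = q₁ then 1 else if i = q₂ then 2 else if i = c then 3 else 0

lemma rk_vX (q₁ q₂ c : Fin n) (h12 : q₁ ≠ q₂) (h13 : q₁ ≠ c) (h23 : q₂ ≠ c) (α : Finset (Fin n)) :
    rkv (vX q₁ q₂ c) α =
      min ((if q₁ ∈ α then 1 else 0) + (if q₂ ∈ α then 1 else 0) + (if c ∈ α then 1 else 0)) 2 := by
  classical
  have hset : (α.image (vX q₁ q₂ c)).erase 0 =
      (if q₁ ∈ α then ({1} : Finset (Fin 4)) else ∅) ∪ (if q₂ ∈ α then {2} else ∅)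
        ∪ (if c ∈ α then {3} else ∅) := by
    ext t
    rw [mem_sv]
    constructor
    · rintro ⟨ht0, i, hi, hvi⟩
      unfold vX at hvi
      by_cases h1 : i = q₁
      · subst h1
        rw [if_pos rfl] at hvi
        subst hvi
        simp [hi]
      · by_cases h2 : i = q₂
        · subst h2
          rw [if_neg h1, if_pos rfl] at hvi
          subst hvi
          simp [hi]
        · by_cases h3 : i = c
          · subst h3
            rw [if_neg h1, if_neg h2, if_pos rfl] at hvi
            subst hvi
            simp [hi]
          · rw [if_neg h1, if_neg h2, if_neg h3] at hvi
            exact absurd hvi.symm ht0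
    · intro ht
      simp only [Finset.mem_union] at ht
      rcases ht with (ht | ht) | ht
      · have h1 : q₁ ∈ α ∧ t = 1 := by
          by_cases hq : q₁ ∈ α
          · rw [if_pos hq, Finset.mem_singleton] at ht; exact ⟨hq, ht⟩
          · rw [if_neg hq] at ht; exact absurd ht (Finset.notMem_empty t)
        refine ⟨by rw [h1.2]; decide, q₁, h1.1, ?_⟩
        rw [h1.2]
        unfold vX
        rw [if_pos rfl]
      · have h1 : q₂ ∈ α ∧ t = 2 := by
          by_cases hq : q₂ ∈ α
          · rw [if_pos hq, Finset.mem_singleton] at ht; exact ⟨hq, ht⟩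
          · rw [if_neg hq] at ht; exact absurd ht (Finset.notMem_empty t)
        refine ⟨by rw [h1.2]; decide, q₂, h1.1, ?_⟩
        rw [h1.2]
        unfold vX
        rw [if_neg (Ne.symm h12), if_pos rfl]
      · have h1 : c ∈ α ∧ t = 3 := by
          by_cases hq : c ∈ α
          · rw [if_pos hq, Finset.mem_singleton] at ht; exact ⟨hq, ht⟩
          · rw [if_neg hq] at ht; exact absurd ht (Finset.notMem_empty t)
        refine ⟨by rw [h1.2]; decide, c, h1.1, ?_⟩
        rw [h1.2]
        unfold vX
        rw [if_neg (Ne.symm h13), if_neg (Ne.symm h23), if_pos rfl]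
  rw [rkv, hset]
  by_cases hq₁ : q₁ ∈ α <;> by_cases hq₂ : q₂ ∈ α <;> by_cases hc : c ∈ α <;>
    simp only [hq₁, hq₂, hc, if_true, if_false] <;> decide

lemma rkX_congr (q₁ q₂ c : Fin n) (h12 : q₁ ≠ q₂) (h13 : q₁ ≠ c) (h23 : q₂ ≠ c)
    (α β : Finset (Fin n)) (e1 : q₁ ∈ α ↔ q₁ ∈ β) (e2 : q₂ ∈ α ↔ q₂ ∈ β)
    (e3 : c ∈ α ↔ c ∈ β) : rkv (vX q₁ q₂ c) α = rkv (vX q₁ q₂ c) β := by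
  rw [rk_vX q₁ q₂ c h12 h13 h23, rk_vX q₁ q₂ c h12 h13 h23]
  simp only [e1, e2, e3]

lemma invalid_xor (q₁ q₂ c : Fin n) (h12 : q₁ ≠ q₂) (h13 : q₁ ≠ c) (h23 : q₂ ≠ c)
    (C : Finset (Fin n)) (Qs : Multiset (Finset (Fin n)))
    (hc : c ∈ C) (h1 : q₁ ∉ C) (h2 : q₂ ∉ C)
    (hm : 2 ≤ Multiset.card (Qs.filter fun Q => q₁ ∈ Q ∨ q₂ ∈ Q)) :
    ¬ Valid (pv (vX q₁ q₂ c)) ⟨C, Qs⟩ := by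
  classical
  rw [valid_pv_iff]
  intro heq
  set R := rkv (vX q₁ q₂ c) with hR
  have hrX := rk_vX q₁ q₂ c h12 h13 h23
  have hrC : R C = 1 := by
    rw [hR, hrX]
    simp [h1, h2, hc]
  have hge1 : ∀ Q : Finset (Fin n), 1 ≤ R (Q ∪ C) := by
    intro Q
    rw [hR, hrX]
    have hcQ : c ∈ Q ∪ C := Finset.mem_union_right Q hc
    simp only [hcQ, if_true]
    split_ifs <;> omega
  have hle2 : ∀ α : Finset (Fin n), R α ≤ 2 := by
    intro α
    rw [hR, hrX]
    exact min_le_right _ _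
  have h2eq : ∀ Q ∈ Qs.filter (fun Q => q₁ ∈ Q ∨ q₂ ∈ Q), R (Q ∪ C) = 2 := by
    intro Q hQ
    rw [Multiset.mem_filter] at hQ
    rw [hR, hrX]
    have hcQ : c ∈ Q ∪ C := Finset.mem_union_right Q hc
    rcases hQ.2 with h | h
    · have hq : q₁ ∈ Q ∪ C := Finset.mem_union_left C h
      simp only [hcQ, hq, if_true]
      split_ifs <;> omega
    · have hq : q₂ ∈ Q ∪ C := Finset.mem_union_left C h
      simp only [hcQ, hq, if_true]
      split_ifs <;> omega
  have hsplit := Multiset.filter_add_not (fun Q => q₁ ∈ Q ∨ q₂ ∈ Q) Qs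
  have hLHS : (2:ℝ) ≤ (Qs.map fun Q => (R (Q ∪ C) : ℝ) - R C).sum := by
    rw [← hsplit, Multiset.map_add, Multiset.sum_add]
    have hA : ((Qs.filter (fun Q => q₁ ∈ Q ∨ q₂ ∈ Q)).map
        (fun Q => (R (Q ∪ C):ℝ) - R C)).sum
        = (Multiset.card (Qs.filter (fun Q => q₁ ∈ Q ∨ q₂ ∈ Q)) : ℝ) := by
      have hcong : ∀ Q ∈ Qs.filter (fun Q => q₁ ∈ Q ∨ q₂ ∈ Q),
          ((R (Q ∪ C):ℝ) - R C) = (fun _ => (1:ℝ)) Q := by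
        intro Q hQ
        rw [h2eq Q hQ, hrC]
        norm_num
      rw [Multiset.map_congr rfl hcong, Multiset.map_const', Multiset.sum_replicate]
      simp
    have hB : 0 ≤ ((Qs.filter (fun Q => ¬(q₁ ∈ Q ∨ q₂ ∈ Q))).map
        (fun Q => (R (Q ∪ C):ℝ) - R C)).sum := by
      apply sum_map_nonneg
      intro Q _
      have h1' : (1:ℝ) ≤ (R (Q ∪ C):ℝ) := by exact_mod_cast hge1 Q
      rw [hrC]
      push_cast
      linarith
    have hcard : (2:ℝ) ≤ (Multiset.card (Qs.filter (fun Q => q₁ ∈ Q ∨ q₂ ∈ Q)) : ℝ) := by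
      exact_mod_cast hm
    linarith
  have hRHS : ((R (Qs.sup ∪ C):ℝ) - R C) ≤ 1 := by
    rw [hrC]
    have h2' : (R (Qs.sup ∪ C):ℝ) ≤ 2 := by exact_mod_cast hle2 (Qs.sup ∪ C)
    push_cast
    linarith
  rw [heq] at hLHS
  linarith



lemma ind_aux (x : Fin n) (C : Finset (Fin n)) (Qs : Multiset (Finset (Fin n)))
    (hcard : x ∉ C → Multiset.card (Qs.filter fun Q => x ∈ Q) ≤ 1) :
    (Multiset.card (Qs.filter fun Q => x ∈ Q ∧ x ∉ C) : ℝ)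
      = if x ∈ Qs.sup ∧ x ∉ C then 1 else 0 := by
  classical
  by_cases hxC : x ∈ C
  · have h0 : Qs.filter (fun Q => x ∈ Q ∧ x ∉ C) = 0 := by
      rw [Multiset.filter_eq_nil]
      intro Q _ h
      exact h.2 hxC
    rw [h0]
    simp [hxC]
  · have hfe : Qs.filter (fun Q => x ∈ Q ∧ x ∉ C) = Qs.filter (fun Q => x ∈ Q) := by
      apply Multiset.filter_congr
      intro Q _
      simp [hxC]
    rw [hfe]
    by_cases hsup : x ∈ Qs.sup
    · obtain ⟨Q, hQ, hxQ⟩ := (mem_msup Qs x).mp hsup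
      have h1 : 1 ≤ Multiset.card (Qs.filter fun Q => x ∈ Q) :=
        (card_filter_pos _ _).mpr ⟨Q, hQ, hxQ⟩
      have h2 := hcard hxC
      have h3 : Multiset.card (Qs.filter fun Q => x ∈ Q) = 1 := by omega
      rw [h3]
      simp [hsup, hxC]
    · have h0 : Multiset.card (Qs.filter fun Q => x ∈ Q) = 0 := by
        by_contra h
        have h1 : 1 ≤ Multiset.card (Qs.filter fun Q => x ∈ Q) := by omega
        obtain ⟨Q, hQ, hxQ⟩ := (card_filter_pos _ _).mp h1
        exact hsup ((mem_msup Qs x).mpr ⟨Q, hQ, hxQ⟩)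
      rw [h0]
      simp [hsup]

lemma valid_xor_K (q₁ q₂ c : Fin n) (h12 : q₁ ≠ q₂) (h13 : q₁ ≠ c) (h23 : q₂ ≠ c)
    (C : Finset (Fin n)) (Qs : Multiset (Finset (Fin n)))
    (hcC : c ∉ C)
    (hcap : Multiset.card (Qs.filter fun Q => c ∈ Q) ≤ 1)
    (hq1 : q₁ ∉ C → Multiset.card (Qs.filter fun Q => q₁ ∈ Q) ≤ 1)
    (hq2 : q₂ ∉ C → Multiset.card (Qs.filter fun Q => q₂ ∈ Q) ≤ 1)
    (h5 : (∀ Q ∈ Qs, c ∉ Q) ∨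
      ((∀ Q ∈ Qs, q₁ ∉ C → q₁ ∈ Q → c ∈ Q) ∧ (∀ Q ∈ Qs, q₂ ∉ C → q₂ ∈ Q → c ∈ Q))) :
    Valid (pv (vX q₁ q₂ c)) ⟨C, Qs⟩ := by
  classical
  rw [valid_pv_iff]
  set R := rkv (vX q₁ q₂ c) with hR
  have hrX := rk_vX q₁ q₂ c h12 h13 h23
  by_cases hex : ∃ Q ∈ Qs, c ∈ Q
  · -- some entry contains c; all activity outside C is inside that entry
    obtain ⟨Qst, hQst, hcQst⟩ := hex
    have h5b1 : ∀ Q ∈ Qs, q₁ ∉ C → q₁ ∈ Q → c ∈ Q := by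
      rcases h5 with h5a | h5b
      · exact absurd hcQst (h5a Qst hQst)
      · exact h5b.1
    have h5b2 : ∀ Q ∈ Qs, q₂ ∉ C → q₂ ∈ Q → c ∈ Q := by
      rcases h5 with h5a | h5b
      · exact absurd hcQst (h5a Qst hQst)
      · exact h5b.2
    obtain ⟨rest, hrest⟩ := Multiset.exists_cons_of_mem hQst
    have hrestc : ∀ Q ∈ rest, c ∉ Q := by
      intro Q hQ hcQ
      have h2c : 2 ≤ Multiset.card (Qs.filter fun Q => c ∈ Q) := by
        rw [hrest, Multiset.filter_cons_of_pos (p := fun Q => c ∈ Q) rest hcQst, Multiset.card_cons]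
        have h1c : 1 ≤ Multiset.card (rest.filter fun Q => c ∈ Q) :=
          (card_filter_pos _ _).mpr ⟨Q, hQ, hcQ⟩
        omega
      omega
    have hrest1 : ∀ Q ∈ rest, q₁ ∉ C → q₁ ∉ Q := by
      intro Q hQ hq hqQ
      exact hrestc Q hQ (h5b1 Q (by rw [hrest]; exact Multiset.mem_cons_of_mem hQ) hq hqQ)
    have hrest2 : ∀ Q ∈ rest, q₂ ∉ C → q₂ ∉ Q := by
      intro Q hQ hq hqQ
      exact hrestc Q hQ (h5b2 Q (by rw [hrest]; exact Multiset.mem_cons_of_mem hQ) hq hqQ)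
    have hterm0 : ∀ Q ∈ rest, ((R (Q ∪ C):ℝ) - R C) = (fun _ => (0:ℝ)) Q := by
      intro Q hQ
      show ((R (Q ∪ C):ℝ) - R C) = (0:ℝ)
      have hcongr : R (Q ∪ C) = R C := by
        apply rkX_congr q₁ q₂ c h12 h13 h23
        · by_cases hq : q₁ ∈ C
          · simp [Finset.mem_union, hq]
          · simp [Finset.mem_union, hq, hrest1 Q hQ hq]
        · by_cases hq : q₂ ∈ C
          · simp [Finset.mem_union, hq]
          · simp [Finset.mem_union, hq, hrest2 Q hQ hq]
        · simp [Finset.mem_union, hcC, hrestc Q hQ]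
      rw [hcongr]
      ring
    have hmem' : ∀ x : Fin n, (∀ Q ∈ rest, x ∉ C → x ∉ Q) →
        (x ∈ (Qst ::ₘ rest).sup ∪ C ↔ x ∈ Qst ∪ C) := by
      intro x hx
      by_cases hxC : x ∈ C
      · simp [Finset.mem_union, hxC]
      · simp only [Finset.mem_union]
        constructor
        · rintro (hs | hC)
          · obtain ⟨Q, hQ, hxQ⟩ := (mem_msup _ x).mp hs
            rw [Multiset.mem_cons] at hQ
            rcases hQ with rfl | hQ
            · exact Or.inl hxQ
            · exact absurd hxQ (hx Q hQ hxC)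
          · exact absurd hC hxC
        · rintro (h | h)
          · exact Or.inl ((mem_msup _ x).mpr ⟨Qst, Multiset.mem_cons_self _ _, h⟩)
          · exact Or.inr h
    have hsup : R ((Qst ::ₘ rest).sup ∪ C) = R (Qst ∪ C) := by
      apply rkX_congr q₁ q₂ c h12 h13 h23
      · exact hmem' q₁ hrest1
      · exact hmem' q₂ hrest2
      · exact hmem' c (fun Q hQ _ => hrestc Q hQ)
    rw [hrest, Multiset.map_cons, Multiset.sum_cons, Multiset.map_congr rfl hterm0,
      Multiset.map_const', Multiset.sum_replicate, smul_zero, add_zero, hsup]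
  · -- c appears nowhere
    push_neg at hex
    have hcsup : c ∉ Qs.sup := fun h => by
      obtain ⟨Q, hQ, hcQ⟩ := (mem_msup Qs c).mp h
      exact hex Q hQ hcQ
    have hadd : ∀ α : Finset (Fin n), c ∉ α →
        (R α : ℝ) = (if q₁ ∈ α then 1 else 0) + (if q₂ ∈ α then 1 else 0) := by
      intro α hα
      rw [hR, hrX]
      simp only [hα, if_false]
      split_ifs <;> norm_num
    have hterm : ∀ Q ∈ Qs, ((R (Q ∪ C):ℝ) - R C)
        = (fun Q => (if q₁ ∈ Q ∧ q₁ ∉ C then (1:ℝ) else 0)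
            + (if q₂ ∈ Q ∧ q₂ ∉ C then (1:ℝ) else 0)) Q := by
      intro Q hQ
      show ((R (Q ∪ C):ℝ) - R C) = (if q₁ ∈ Q ∧ q₁ ∉ C then (1:ℝ) else 0)
        + (if q₂ ∈ Q ∧ q₂ ∉ C then (1:ℝ) else 0)
      rw [hadd (Q ∪ C) (by simp [Finset.mem_union, hex Q hQ, hcC]), hadd C hcC]
      by_cases e1 : q₁ ∈ C <;> by_cases e2 : q₂ ∈ C <;> by_cases f1 : q₁ ∈ Q <;>
        by_cases f2 : q₂ ∈ Q <;>
        simp [e1, e2, f1, f2, Finset.mem_union] <;> ring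
    rw [Multiset.map_congr rfl hterm, Multiset.sum_map_add, sum_map_ite, sum_map_ite,
      ind_aux q₁ C Qs hq1, ind_aux q₂ C Qs hq2,
      hadd (Qs.sup ∪ C) (by simp [Finset.mem_union, hcsup, hcC]), hadd C hcC]
    by_cases e1 : q₁ ∈ C <;> by_cases e2 : q₂ ∈ C <;> by_cases s1 : q₁ ∈ Qs.sup <;>
      by_cases s2 : q₂ ∈ Qs.sup <;>
      simp [e1, e2, s1, s2, Finset.mem_union] <;> ring

end Machinery

section Combinatorics

lemma mem_pur_Qs (K : CMI n) (Q : Finset (Fin n)) :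
    Q ∈ (pur K).Qs ↔ (Q ≠ ∅ ∧ ∃ Q₀ ∈ K.Qs, Q = Q₀ \ K.C) := by
  show Q ∈ ((K.Qs.map fun Q => Q \ K.C).filter fun Q => Q ≠ ∅) ↔ _
  rw [Multiset.mem_filter, Multiset.mem_map]
  constructor
  · rintro ⟨⟨Q₀, hQ₀, rfl⟩, hne⟩
    exact ⟨hne, Q₀, hQ₀, rfl⟩
  · rintro ⟨hne, Q₀, hQ₀, rfl⟩
    exact ⟨⟨Q₀, hQ₀, rfl⟩, hne⟩

lemma mem_repSet (K : CMI n) (x : Fin n) :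
    x ∈ repSet K ↔ 2 ≤ Multiset.card (K.Qs.filter fun Q => x ∈ Q) := by
  simp [repSet]

lemma repSet_pur_disjC (K : CMI n) (x : Fin n) (hx : x ∈ repSet (pur K)) : x ∉ K.C := by
  rw [mem_repSet] at hx
  obtain ⟨Q, hQ, hxQ⟩ := (card_filter_pos (pur K).Qs _).mp (le_trans one_le_two hx)
  obtain ⟨-, Q₀, -, rfl⟩ := (mem_pur_Qs K Q).mp hQ
  exact fun hxC => (Finset.mem_sdiff.mp hxQ).2 hxC

lemma pur_filter_card (K : CMI n) (P : Finset (Fin n) → Prop) [DecidablePred P]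
    (h1 : ∀ Q, P Q → Q ≠ ∅) (h2 : ∀ Q, P (Q \ K.C) ↔ P Q) :
    Multiset.card ((pur K).Qs.filter P) = Multiset.card (K.Qs.filter P) := by
  show Multiset.card ((((K.Qs.map fun Q => Q \ K.C)).filter fun Q => Q ≠ ∅).filter P)
    = Multiset.card (K.Qs.filter P)
  rw [Multiset.filter_filter]
  have he : ((K.Qs.map fun Q => Q \ K.C).filter fun Q => P Q ∧ Q ≠ ∅)
      = ((K.Qs.map fun Q => Q \ K.C).filter P) :=
    Multiset.filter_congr (fun Q _ => ⟨fun h => h.1, fun h => ⟨h, h1 Q h⟩⟩)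
  rw [he, Multiset.filter_map, Multiset.card_map]
  congr 1
  exact Multiset.filter_congr (fun Q _ => by simp only [Function.comp]; exact h2 Q)

lemma mem_parts (K : CMI n) (P : Finset (Fin n)) :
    P ∈ parts K ↔ (P ≠ ∅ ∧ ∃ Q ∈ K.Qs, P = Q \ repSet K) := by
  show P ∈ ((K.Qs.map fun Q => Q \ repSet K).filter fun P => P ≠ ∅) ↔ _
  rw [Multiset.mem_filter, Multiset.mem_map]
  constructor
  · rintro ⟨⟨Q₀, hQ₀, rfl⟩, hne⟩
    exact ⟨hne, Q₀, hQ₀, rfl⟩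
  · rintro ⟨hne, Q₀, hQ₀, rfl⟩
    exact ⟨⟨Q₀, hQ₀, rfl⟩, hne⟩

lemma canParts_cases (K : CMI n) : canParts K = 0 ∨ canParts K = parts K := by
  rw [canParts]
  split_ifs <;> simp

lemma two_le_card_decomp {β : Type*} (s : Multiset β) (h : 2 ≤ Multiset.card s) :
    ∃ a b t, s = a ::ₘ b ::ₘ t := by
  have hs : s ≠ 0 := by intro h0; rw [h0] at h; simp at h
  obtain ⟨a, ha⟩ := Multiset.exists_mem_of_ne_zero hs
  obtain ⟨t, rfl⟩ := Multiset.exists_cons_of_mem ha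
  rw [Multiset.card_cons] at h
  have ht : t ≠ 0 := by intro h0; rw [h0] at h; simp at h
  obtain ⟨b, hb⟩ := Multiset.exists_mem_of_ne_zero ht
  obtain ⟨u, rfl⟩ := Multiset.exists_cons_of_mem hb
  exact ⟨a, b, u, rfl⟩

lemma cons_cons_le_map {β γ : Type*} (f : β → γ) (s : Multiset β) (a b : γ) (t : Multiset γ)
    (h : a ::ₘ b ::ₘ t ≤ s.map f) : ∃ x y u, s = x ::ₘ y ::ₘ u ∧ f x = a ∧ f y = b := by
  have ha : a ∈ s.map f := Multiset.mem_of_le h (Multiset.mem_cons_self a _)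
  obtain ⟨x, hx, hfx⟩ := Multiset.mem_map.mp ha
  obtain ⟨s₁, rfl⟩ := Multiset.exists_cons_of_mem hx
  rw [Multiset.map_cons, hfx] at h
  have h2 : b ::ₘ t ≤ s₁.map f := (Multiset.cons_le_cons_iff a).mp h
  have hb : b ∈ s₁.map f := Multiset.mem_of_le h2 (Multiset.mem_cons_self b _)
  obtain ⟨y, hy, hfy⟩ := Multiset.mem_map.mp hb
  obtain ⟨u, rfl⟩ := Multiset.exists_cons_of_mem hy
  exact ⟨x, y, u, rfl, hfx, hfy⟩

lemma deg_empty : Degenerate (⟨∅, 0⟩ : CMI n) := by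
  intro p _
  rw [Valid, J]
  simp only [Multiset.map_zero, Multiset.sum_zero, Multiset.sup_zero, Hc]
  have : ((⊥ : Finset (Fin n)) ∪ ∅) = (∅ : Finset (Fin n)) := by simp
  rw [this]
  ring

end Combinatorics




section Structural

lemma inter_singleton_nonempty (Q : Finset (Fin n)) (q : Fin n) :
    (Q ∩ {q}).Nonempty ↔ q ∈ Q := by
  constructor
  · rintro ⟨x, hx⟩
    rw [Finset.mem_inter, Finset.mem_singleton] at hx
    rw [← hx.2]
    exact hx.1
  · intro h
    exact ⟨q, Finset.mem_inter.mpr ⟨h, Finset.mem_singleton_self q⟩⟩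

lemma card_filter_mem_pur (K : CMI n) (q : Fin n) (hq : q ∉ K.C) :
    Multiset.card ((pur K).Qs.filter fun Q => q ∈ Q)
      = Multiset.card (K.Qs.filter fun Q => q ∈ Q) :=
  pur_filter_card K _ (fun Q hQ => Finset.ne_empty_of_mem hQ)
    (fun Q => by simp [Finset.mem_sdiff, hq])

/-- S1 : if `K` implies `K'` then `𝕀_{K'} ⊆ 𝕀_K`. -/
lemma repSet_mono (K K' : CMI n) (himp : Implies K K') :
    repSet (pur K') ⊆ repSet (pur K) := by
  intro q hq'
  by_contra hq
  have hqC' : q ∉ K'.C := repSet_pur_disjC K' q hq'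
  have hfc : ∀ (L : CMI n), Multiset.card (L.Qs.filter fun Q => (Q ∩ {q}).Nonempty)
      = Multiset.card (L.Qs.filter fun Q => q ∈ Q) := by
    intro L
    congr 1
    exact Multiset.filter_congr (fun Q _ => inter_singleton_nonempty Q q)
  have hvK : Valid (pv (vA {q})) K := by
    apply (valid_copy_iff {q} K.C K.Qs).mpr
    by_cases hqC : q ∈ K.C
    · exact Or.inl ⟨q, Finset.mem_inter.mpr ⟨hqC, Finset.mem_singleton_self q⟩⟩
    · right
      rw [hfc K, ← card_filter_mem_pur K q hqC]
      rw [mem_repSet] at hq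
      omega
  have hvK' := himp _ (FE_pv _) hvK
  rcases (valid_copy_iff {q} K'.C K'.Qs).mp hvK' with h | h
  · obtain ⟨x, hx⟩ := h
    rw [Finset.mem_inter, Finset.mem_singleton] at hx
    exact hqC' (hx.2 ▸ hx.1)
  · rw [hfc K', ← card_filter_mem_pur K' q hqC'] at h
    rw [mem_repSet] at hq'
    omega

/-- S2 : if `K` implies `K'` and `pur K'` has at least two entries then `K.C ⊆ K'.C`. -/
lemma CC_sub (K K' : CMI n) (himp : Implies K K')
    (hp2 : 2 ≤ Multiset.card ((pur K').Qs)) : K.C ⊆ K'.C := by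
  intro c hc
  by_contra hc'
  set A : Finset (Fin n) := insert c ((pur K').Qs.sup) with hA
  have hAC' : ∀ x ∈ A, x ∉ K'.C := by
    intro x hx
    rw [hA, Finset.mem_insert] at hx
    rcases hx with rfl | hx
    · exact hc'
    · obtain ⟨Q, hQ, hxQ⟩ := (mem_msup _ x).mp hx
      obtain ⟨-, Q₀, -, rfl⟩ := (mem_pur_Qs K' Q).mp hQ
      exact (Finset.mem_sdiff.mp hxQ).2
  have hvK : Valid (pv (vA A)) K := (valid_copy_iff A K.C K.Qs).mpr
    (Or.inl ⟨c, Finset.mem_inter.mpr ⟨hc, Finset.mem_insert_self c _⟩⟩)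
  have hvK' := himp _ (FE_pv _) hvK
  rcases (valid_copy_iff A K'.C K'.Qs).mp hvK' with h | h
  · obtain ⟨x, hx⟩ := h
    rw [Finset.mem_inter] at hx
    exact hAC' x hx.2 hx.1
  · have htrans : Multiset.card ((pur K').Qs.filter fun Q => (Q ∩ A).Nonempty)
        = Multiset.card (K'.Qs.filter fun Q => (Q ∩ A).Nonempty) := by
      apply pur_filter_card K'
      · rintro Q ⟨x, hx⟩
        exact Finset.ne_empty_of_mem (Finset.mem_inter.mp hx).1
      · intro Q
        constructor
        · rintro ⟨x, hx⟩
          rw [Finset.mem_inter, Finset.mem_sdiff] at hx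
          exact ⟨x, Finset.mem_inter.mpr ⟨hx.1.1, hx.2⟩⟩
        · rintro ⟨x, hx⟩
          rw [Finset.mem_inter] at hx
          exact ⟨x, Finset.mem_inter.mpr ⟨Finset.mem_sdiff.mpr ⟨hx.1, hAC' x hx.2⟩, hx.2⟩⟩
    have hall : (pur K').Qs.filter (fun Q => (Q ∩ A).Nonempty) = (pur K').Qs := by
      rw [Multiset.filter_eq_self]
      intro Q hQ
      obtain ⟨hne, -⟩ := (mem_pur_Qs K' Q).mp hQ
      obtain ⟨x, hx⟩ := Finset.nonempty_iff_ne_empty.mpr hne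
      refine ⟨x, Finset.mem_inter.mpr ⟨hx, ?_⟩⟩
      rw [hA, Finset.mem_insert]
      exact Or.inr ((mem_msup _ x).mpr ⟨Q, hQ, hx⟩)
    rw [← htrans, hall] at h
    omega

/-- extraction of the two witnesses `q₁ q₂` from `2 ≤ card Ts`. -/
lemma exists_witnesses (K K' : CMI n)
    (hTs : 2 ≤ Multiset.card (((canParts (pur K')).map fun P => P \ repSet (pur K)).filter
      fun T => T ≠ ∅)) :
    ∃ q₁ q₂ : Fin n, q₁ ≠ q₂ ∧
      q₁ ∉ repSet (pur K) ∧ q₂ ∉ repSet (pur K) ∧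
      q₁ ∉ K'.C ∧ q₂ ∉ K'.C ∧
      2 ≤ Multiset.card (K'.Qs.filter fun Q => q₁ ∈ Q ∨ q₂ ∈ Q) ∧
      2 ≤ Multiset.card ((pur K').Qs) := by
  classical
  set I := repSet (pur K) with hI
  set I' := repSet (pur K') with hI'
  obtain ⟨T₁, T₂, r, hTsd⟩ := two_le_card_decomp _ hTs
  have hle1 : T₁ ::ₘ T₂ ::ₘ r ≤ (canParts (pur K')).map (fun P => P \ I) := by
    rw [← hTsd]
    exact Multiset.filter_le _ _
  obtain ⟨P₁, P₂, ps, hcp, hP₁, hP₂⟩ := cons_cons_le_map _ _ _ _ _ hle1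
  have hcpne : canParts (pur K') ≠ 0 := by rw [hcp]; simp
  have hcp_parts : canParts (pur K') = parts (pur K') := (canParts_cases _).resolve_left hcpne
  have hparts : parts (pur K') = P₁ ::ₘ P₂ ::ₘ ps := by rw [← hcp_parts, hcp]
  have hle2 : P₁ ::ₘ P₂ ::ₘ ps ≤ ((pur K').Qs).map (fun Q => Q \ I') := by
    rw [← hparts]
    exact Multiset.filter_le _ _
  obtain ⟨Q₁, Q₂, qs, hQs, hQ₁, hQ₂⟩ := cons_cons_le_map _ _ _ _ _ hle2
  have hT₁ne : T₁ ≠ ∅ := by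
    have : T₁ ∈ (((canParts (pur K')).map fun P => P \ I).filter fun T => T ≠ ∅) := by
      rw [hTsd]
      exact Multiset.mem_cons_self _ _
    exact (Multiset.mem_filter.mp this).2
  have hT₂ne : T₂ ≠ ∅ := by
    have : T₂ ∈ (((canParts (pur K')).map fun P => P \ I).filter fun T => T ≠ ∅) := by
      rw [hTsd]
      exact Multiset.mem_cons_of_mem (Multiset.mem_cons_self _ _)
    exact (Multiset.mem_filter.mp this).2
  obtain ⟨q₁, hq₁T⟩ := Finset.nonempty_iff_ne_empty.mpr hT₁ne
  obtain ⟨q₂, hq₂T⟩ := Finset.nonempty_iff_ne_empty.mpr hT₂ne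
  rw [← hP₁, Finset.mem_sdiff] at hq₁T
  rw [← hP₂, Finset.mem_sdiff] at hq₂T
  obtain ⟨hq₁P, hq₁I⟩ := hq₁T
  obtain ⟨hq₂P, hq₂I⟩ := hq₂T
  rw [← hQ₁, Finset.mem_sdiff] at hq₁P
  rw [← hQ₂, Finset.mem_sdiff] at hq₂P
  obtain ⟨hq₁Q, hq₁I'⟩ := hq₁P
  obtain ⟨hq₂Q, hq₂I'⟩ := hq₂P
  have hQ₁mem : Q₁ ∈ (pur K').Qs := by rw [hQs]; exact Multiset.mem_cons_self _ _
  have hQ₂mem : Q₂ ∈ (pur K').Qs := by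
    rw [hQs]
    exact Multiset.mem_cons_of_mem (Multiset.mem_cons_self _ _)
  have hq₁C' : q₁ ∉ K'.C := by
    obtain ⟨-, Q₀, -, rfl⟩ := (mem_pur_Qs K' Q₁).mp hQ₁mem
    exact (Finset.mem_sdiff.mp hq₁Q).2
  have hq₂C' : q₂ ∉ K'.C := by
    obtain ⟨-, Q₀, -, rfl⟩ := (mem_pur_Qs K' Q₂).mp hQ₂mem
    exact (Finset.mem_sdiff.mp hq₂Q).2
  have hq₁Q₂ : q₁ ∉ Q₂ := by
    intro hmem
    apply hq₁I'
    rw [hI', mem_repSet]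
    rw [hQs, Multiset.filter_cons_of_pos (p := fun Q => q₁ ∈ Q) _ hq₁Q,
      Multiset.filter_cons_of_pos (p := fun Q => q₁ ∈ Q) _ hmem, Multiset.card_cons,
      Multiset.card_cons]
    omega
  have hne : q₁ ≠ q₂ := fun h => hq₁Q₂ (h ▸ hq₂Q)
  have hcount : 2 ≤ Multiset.card ((pur K').Qs.filter fun Q => q₁ ∈ Q ∨ q₂ ∈ Q) := by
    rw [hQs, Multiset.filter_cons_of_pos (p := fun Q => q₁ ∈ Q ∨ q₂ ∈ Q) _ (Or.inl hq₁Q),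
      Multiset.filter_cons_of_pos (p := fun Q => q₁ ∈ Q ∨ q₂ ∈ Q) _ (Or.inr hq₂Q),
      Multiset.card_cons, Multiset.card_cons]
    omega
  have htrans : Multiset.card ((pur K').Qs.filter fun Q => q₁ ∈ Q ∨ q₂ ∈ Q)
      = Multiset.card (K'.Qs.filter fun Q => q₁ ∈ Q ∨ q₂ ∈ Q) := by
    apply pur_filter_card K'
    · rintro Q (h | h) <;> exact Finset.ne_empty_of_mem h
    · intro Q
      simp [Finset.mem_sdiff, hq₁C', hq₂C']
  have hp2 : 2 ≤ Multiset.card ((pur K').Qs) := by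
    rw [hQs, Multiset.card_cons, Multiset.card_cons]
    omega
  exact ⟨q₁, q₂, hne, hq₁I, hq₂I, hq₁C', hq₂C', htrans ▸ hcount, hp2⟩

end Structural


section Final

lemma mem_eq_of_card_le_one {β : Type*} {s : Multiset β} (h : Multiset.card s ≤ 1)
    {a b : β} (ha : a ∈ s) (hb : b ∈ s) : a = b := by
  obtain ⟨t, rfl⟩ := Multiset.exists_cons_of_mem ha
  rw [Multiset.card_cons] at h
  have ht : t = 0 := by rw [← Multiset.card_eq_zero]; omega
  subst ht
  rw [Multiset.mem_cons] at hb
  rcases hb with rfl | hb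
  · rfl
  · exact absurd hb (Multiset.notMem_zero b)

lemma parts_of_repSet_empty (K₀ : CMI n) (h : repSet K₀ = ∅)
    (hne : ∀ Q ∈ K₀.Qs, Q ≠ ∅) : parts K₀ = K₀.Qs := by
  rw [parts, h]
  have hmap : K₀.Qs.map (fun Q => Q \ ∅) = K₀.Qs.map id :=
    Multiset.map_congr rfl (fun Q _ => Finset.sdiff_empty)
  rw [hmap, Multiset.map_id]
  exact Multiset.filter_eq_self.mpr hne

/-- S3 : the xor argument. -/
lemma xor_argument (K K' : CMI n) (himp : Implies K K')
    (q₁ q₂ x : Fin n) (h12 : q₁ ≠ q₂)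
    (hq₁I : q₁ ∉ repSet (pur K)) (hq₂I : q₂ ∉ repSet (pur K))
    (hq₁C' : q₁ ∉ K'.C) (hq₂C' : q₂ ∉ K'.C)
    (hcnt : 2 ≤ Multiset.card (K'.Qs.filter fun Q => q₁ ∈ Q ∨ q₂ ∈ Q))
    (hxC' : x ∈ K'.C) (hxI : x ∉ repSet (pur K)) (hxC : x ∉ K.C)
    (hxP : x ∉ (canParts (pur K)).sup) : False := by
  classical
  have h13 : q₁ ≠ x := fun h => hq₁C' (h ▸ hxC')
  have h23 : q₂ ≠ x := fun h => hq₂C' (h ▸ hxC')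
  have hvK : Valid (pv (vX q₁ q₂ x)) K := by
    apply valid_xor_K q₁ q₂ x h12 h13 h23 K.C K.Qs hxC
    · rw [← card_filter_mem_pur K x hxC]
      rw [mem_repSet] at hxI
      omega
    · intro h
      rw [← card_filter_mem_pur K q₁ h]
      rw [mem_repSet] at hq₁I
      omega
    · intro h
      rw [← card_filter_mem_pur K q₂ h]
      rw [mem_repSet] at hq₂I
      omega
    · by_cases hex : ∃ Q ∈ K.Qs, x ∈ Q
      · right
        obtain ⟨Qx, hQx, hxQx⟩ := hex
        have hpurx : Qx \ K.C ∈ (pur K).Qs := (mem_pur_Qs K _).mpr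
          ⟨Finset.ne_empty_of_mem (Finset.mem_sdiff.mpr ⟨hxQx, hxC⟩), Qx, hQx, rfl⟩
        have hxmem2 : x ∈ (Qx \ K.C) \ repSet (pur K) :=
          Finset.mem_sdiff.mpr ⟨Finset.mem_sdiff.mpr ⟨hxQx, hxC⟩, hxI⟩
        have hpartx : (Qx \ K.C) \ repSet (pur K) ∈ parts (pur K) := (mem_parts _ _).mpr
          ⟨Finset.ne_empty_of_mem hxmem2, _, hpurx, rfl⟩
        have hcp0 : canParts (pur K) = 0 := by
          rcases canParts_cases (pur K) with h | h
          · exact h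
          · exfalso
            exact hxP ((mem_msup _ x).mpr ⟨_, h ▸ hpartx, hxmem2⟩)
        have hbr : Multiset.card ((pur K).Qs) ≤ 1 ∨ Multiset.card (parts (pur K)) ≤ 1 := by
          by_contra hbb
          push_neg at hbb
          rw [canParts, if_neg (by omega), if_neg (fun hh => by
            have := hh.2
            omega)] at hcp0
          rw [hcp0] at hpartx
          exact Multiset.notMem_zero _ hpartx
        have key : ∀ y : Fin n, y ∉ repSet (pur K) → ∀ Q ∈ K.Qs, y ∉ K.C → y ∈ Q → x ∈ Q := by
          intro y hyI Q hQ hyC hyQ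
          have hpurq : Q \ K.C ∈ (pur K).Qs := (mem_pur_Qs K _).mpr
            ⟨Finset.ne_empty_of_mem (Finset.mem_sdiff.mpr ⟨hyQ, hyC⟩), Q, hQ, rfl⟩
          rcases hbr with hb | hb
          · have heq : Q \ K.C = Qx \ K.C := mem_eq_of_card_le_one hb hpurq hpurx
            have : x ∈ Q \ K.C := by
              rw [heq]
              exact Finset.mem_sdiff.mpr ⟨hxQx, hxC⟩
            exact (Finset.mem_sdiff.mp this).1
          · have hpartq : (Q \ K.C) \ repSet (pur K) ∈ parts (pur K) := (mem_parts _ _).mpr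
              ⟨Finset.ne_empty_of_mem (Finset.mem_sdiff.mpr
                ⟨Finset.mem_sdiff.mpr ⟨hyQ, hyC⟩, hyI⟩), _, hpurq, rfl⟩
            have heq : (Q \ K.C) \ repSet (pur K) = (Qx \ K.C) \ repSet (pur K) :=
              mem_eq_of_card_le_one hb hpartq hpartx
            have : x ∈ (Q \ K.C) \ repSet (pur K) := by
              rw [heq]
              exact hxmem2
            exact (Finset.mem_sdiff.mp (Finset.mem_sdiff.mp this).1).1
        exact ⟨fun Q hQ h1 h2 => key q₁ hq₁I Q hQ h1 h2,
          fun Q hQ h1 h2 => key q₂ hq₂I Q hQ h1 h2⟩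
      · left
        push_neg at hex
        exact hex
  exact invalid_xor q₁ q₂ x h12 h13 h23 K'.C K'.Qs hxC' hq₁C' hq₂C' hcnt
    (himp _ (FE_pv _) hvK)

end Final

/-- if `K` implies `K'` and `R_K^{K'} ≠ (·,⟨⟩)`, then
`C ⊆ C'' ⊆ S \ P''`, where `S = C ∪ (∪ P_i)` and `P'' = ∪ P''_j`. -/
theorem stmt16 {n : ℕ} (K K' : CMI n)
    (hdK : ¬ Degenerate K) (hdK' : ¬ Degenerate K')
    (himp : Implies K K') (hR : ¬ Degenerate (RCond K K')) :
    K.C ⊆ (can (pur (RCond K K'))).C ∧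
      (can (pur (RCond K K'))).C ⊆
        (K.C ∪ (canParts (pur K)).sup) \ (canParts (pur (RCond K K'))).sup := by
  classical
  set I := repSet (pur K) with hI
  set I' := repSet (pur K') with hI'
  set Ts := (((canParts (pur K')).map fun P => P \ I).filter fun T => T ≠ ∅) with hTsdef
  have hI'I : I' \ I = ∅ := Finset.sdiff_eq_empty_iff_subset.mpr (repSet_mono K K' himp)
  have hTs2 : 2 ≤ Multiset.card Ts := by
    by_contra h
    push_neg at h
    have hdeg : RCond K K' = ⟨∅, 0⟩ := by
      simp only [RCond]
      rw [← hI, ← hI', ← hTsdef, if_pos ⟨hI'I, by omega⟩]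
    exact hR (fun p hp => hdeg ▸ deg_empty p hp)
  have hRC : RCond K K' = ⟨K'.C \ I, Ts⟩ := by
    simp only [RCond]
    rw [← hI, ← hI', ← hTsdef, if_neg (fun hh => by omega), if_pos hI'I]
  obtain ⟨q₁, q₂, h12, hq₁I, hq₂I, hq₁C', hq₂C', hcnt, hp2⟩ :=
    exists_witnesses K K' (by rw [hTsdef] at hTs2; exact hTs2)
  have hTsfact : ∀ T ∈ Ts, T ≠ ∅ ∧ T ∩ K'.C = ∅ ∧ T ∩ I = ∅ := by
    intro T hT
    rw [hTsdef, Multiset.mem_filter, Multiset.mem_map] at hT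
    obtain ⟨⟨P, hP, rfl⟩, hne⟩ := hT
    refine ⟨hne, ?_, ?_⟩
    · have hcp : canParts (pur K') = parts (pur K') := (canParts_cases _).resolve_left
        (fun h0 => by rw [h0] at hP; exact Multiset.notMem_zero _ hP)
      rw [hcp] at hP
      obtain ⟨-, Q, hQ, rfl⟩ := (mem_parts _ _).mp hP
      obtain ⟨-, Q₀, -, rfl⟩ := (mem_pur_Qs K' Q).mp hQ
      rw [Finset.eq_empty_iff_forall_notMem]
      intro y hy
      rw [Finset.mem_inter, Finset.mem_sdiff, Finset.mem_sdiff, Finset.mem_sdiff] at hy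
      exact hy.1.1.1.2 hy.2
    · rw [Finset.eq_empty_iff_forall_notMem]
      intro y hy
      rw [Finset.mem_inter, Finset.mem_sdiff] at hy
      exact hy.1.2 hy.2
  have hpurR : pur (RCond K K') = ⟨K'.C \ I, Ts⟩ := by
    rw [hRC, pur]
    have hmap : Ts.map (fun Q => Q \ (K'.C \ I)) = Ts.map id :=
      Multiset.map_congr rfl (fun T hT => by
        obtain ⟨-, hTC, -⟩ := hTsfact T hT
        apply Finset.sdiff_eq_self_iff_disjoint.mpr
        rw [Finset.disjoint_left]
        intro y hyT hyC
        rw [Finset.mem_sdiff] at hyC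
        exact (Finset.eq_empty_iff_forall_notMem.mp hTC y)
          (Finset.mem_inter.mpr ⟨hyT, hyC.1⟩))
    have : ((⟨K'.C \ I, Ts⟩ : CMI n).Qs.map fun Q => Q \ (⟨K'.C \ I, Ts⟩ : CMI n).C).filter
        (fun Q => Q ≠ ∅) = Ts := by
      show (Ts.map fun Q => Q \ (K'.C \ I)).filter (fun Q => Q ≠ ∅) = Ts
      rw [hmap, Multiset.map_id]
      exact Multiset.filter_eq_self.mpr (fun T hT => (hTsfact T hT).1)
    rw [this]
  have hI'' : repSet (⟨K'.C \ I, Ts⟩ : CMI n) = ∅ := by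
    rw [Finset.eq_empty_iff_forall_notMem]
    intro y hy
    rw [mem_repSet] at hy
    have hy' : 2 ≤ Multiset.card (Ts.filter fun T => y ∈ T) := hy
    obtain ⟨T0, hT0, hyT0⟩ := (card_filter_pos _ _).mp (le_trans one_le_two hy)
    have hyI : y ∉ I := by
      obtain ⟨-, -, hTI⟩ := hTsfact T0 hT0
      intro hyI
      exact (Finset.eq_empty_iff_forall_notMem.mp hTI y)
        (Finset.mem_inter.mpr ⟨hyT0, hyI⟩)
    have hne0 : canParts (pur K') ≠ 0 := by
      intro h0
      rw [hTsdef, h0] at hT0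
      simp at hT0
    have hcp : canParts (pur K') = parts (pur K') := (canParts_cases _).resolve_left hne0
    have hchain1 : Multiset.card (Ts.filter fun T => y ∈ T)
        ≤ Multiset.card ((canParts (pur K')).filter fun P => y ∈ P \ I) := by
      rw [hTsdef]
      refine le_trans (Multiset.card_le_card
        (Multiset.filter_le_filter _ (Multiset.filter_le _ _))) ?_
      rw [Multiset.filter_map, Multiset.card_map]
      exact Multiset.card_le_card (Multiset.monotone_filter_right _ (fun P hP => hP))
    have hchain2 : Multiset.card ((canParts (pur K')).filter fun P => y ∈ P \ I)
        ≤ Multiset.card ((pur K').Qs.filter fun Q => y ∈ Q) := by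
      rw [hcp]
      have h2 : Multiset.card ((parts (pur K')).filter fun P => y ∈ P \ I)
          ≤ Multiset.card ((parts (pur K')).filter fun P => y ∈ P) :=
        Multiset.card_le_card (Multiset.monotone_filter_right _
          (fun P hP => (Finset.mem_sdiff.mp hP).1))
      refine le_trans h2 ?_
      show Multiset.card ((((pur K').Qs.map fun Q => Q \ I').filter
        (fun P => P ≠ ∅)).filter fun P => y ∈ P) ≤ _
      refine le_trans (Multiset.card_le_card
        (Multiset.filter_le_filter _ (Multiset.filter_le _ _))) ?_
      rw [Multiset.filter_map, Multiset.card_map]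
      exact Multiset.card_le_card (Multiset.monotone_filter_right _
        (fun Q hQ => (Finset.mem_sdiff.mp hQ).1))
    have hyI' : y ∈ I' := by
      rw [hI', mem_repSet]
      omega
    exact hyI (Finset.sdiff_eq_empty_iff_subset.mp hI'I hyI')
  have hQsne : ∀ T ∈ Ts, T ≠ ∅ := fun T hT => (hTsfact T hT).1
  have hcanC : can (pur (RCond K K')) = ⟨K'.C \ I, Ts⟩ := by
    rw [hpurR, can, if_neg (by show ¬ Multiset.card Ts ≤ 1; omega), if_pos hI'']
    rw [parts_of_repSet_empty _ hI'' hQsne]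
  have hcanP : canParts (pur (RCond K K')) = Ts := by
    rw [hpurR, canParts, if_neg (by show ¬ Multiset.card Ts ≤ 1; omega),
      if_neg (fun hh => hh.1 hI'')]
    rw [parts_of_repSet_empty _ hI'' hQsne]
  constructor
  · rw [hcanC]
    intro c hc
    rw [Finset.mem_sdiff]
    exact ⟨CC_sub K K' himp hp2 hc, fun hcI => repSet_pur_disjC K c hcI hc⟩
  · rw [hcanC, hcanP]
    intro x hx
    rw [Finset.mem_sdiff] at hx
    obtain ⟨hxC', hxI⟩ := hx
    rw [Finset.mem_sdiff]
    constructor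
    · by_contra hxS
      rw [Finset.mem_union] at hxS
      push_neg at hxS
      exact xor_argument K K' himp q₁ q₂ x h12 hq₁I hq₂I hq₁C' hq₂C' hcnt hxC' hxI
        hxS.1 hxS.2
    · intro hxTs
      obtain ⟨T, hT, hxT⟩ := (mem_msup _ x).mp hxTs
      obtain ⟨-, hTC, -⟩ := hTsfact T hT
      exact (Finset.eq_empty_iff_forall_notMem.mp hTC x)
        (Finset.mem_inter.mpr ⟨hxT, hxC'⟩)

end Paper
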